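/- arXiv:1612.01566 — 2 statements merged into one kernel-verified Lean document; each statement's English description precedes it below -/
import Mathlib

section
/- Let f : [0,∞) → ℝ be a continuous, positive function, and let b, C₀ > 0 be constants. Suppose that for all 0 ≤ t₀ ≤ t₁ ≤ t₂ we have f(t₂) + b ∫_{t₁}^{t₂} f(s) ds ≤ f(t₁) + C₀ (t₂ − t₁) f(t₀). Then for all t ≥ t₀ we have f(t) ≤ (1 + C₀ b⁻¹) f(t₀). -/
open MeasureTheory

/-- Gronwall-type lemma: uniform bound. -/
theorem stmt0 (f : ℝ → ℝ) (b C₀ : ℝ)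
    (hf_cont : ContinuousOn f (Set.Ici 0))
    (hf_pos : ∀ t : ℝ, 0 ≤ t → 0 < f t)
    (hb : 0 < b) (hC₀ : 0 < C₀)
    (hineq : ∀ t₀ t₁ t₂ : ℝ, 0 ≤ t₀ → t₀ ≤ t₁ → t₁ ≤ t₂ →
      f t₂ + b * ∫ s in t₁..t₂, f s ≤ f t₁ + C₀ * (t₂ - t₁) * f t₀) :
    ∀ t₀ t : ℝ, 0 ≤ t₀ → t₀ ≤ t → f t ≤ (1 + C₀ * b⁻¹) * f t₀ := by
  intro t₀ t ht₀ htt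
  by_contra h
  push_neg at h
  set K : ℝ := 1 + C₀ * b⁻¹ with hKdef
  have hft₀ : 0 < f t₀ := hf_pos t₀ ht₀
  have hbinv : 0 < C₀ * b⁻¹ := by positivity
  have hK1 : (1 : ℝ) ≤ K := by simp [hKdef]; positivity
  have ht₀K : f t₀ ≤ K * f t₀ := le_mul_of_one_le_left hft₀.le hK1
  have ht0t : t₀ < t := by
    rcases lt_or_eq_of_le htt with h' | h'
    · exact h'
    · exact absurd h (by rw [← h']; exact not_lt.2 ht₀K)
  have hsub : Set.Icc t₀ t ⊆ Set.Ici 0 := fun x hx => le_trans ht₀ hx.1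
  have hc : ContinuousOn f (Set.Icc t₀ t) := hf_cont.mono hsub
  set S : Set ℝ := Set.Icc t₀ t ∩ f ⁻¹' Set.Iic (K * f t₀) with hSdef
  have hS_closed : IsClosed S :=
    hc.preimage_isClosed_of_isClosed isClosed_Icc isClosed_Iic
  have hne : S.Nonempty := ⟨t₀, ⟨le_refl _, le_of_lt ht0t⟩, ht₀K⟩
  have hbdd : BddAbove S := ⟨t, fun x hx => hx.1.2⟩
  set u : ℝ := sSup S with hudef
  have hu : u ∈ S := hS_closed.csSup_mem hne hbdd
  have hut : u ≤ t := hu.1.2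
  have ht₀u : t₀ ≤ u := hu.1.1
  have hult : u < t := by
    rcases lt_or_eq_of_le hut with h' | h'
    · exact h'
    · exact absurd h (by rw [← h']; exact not_lt.2 hu.2)
  -- lower bound for f on Ioc u t
  have hlow : ∀ s ∈ Set.Ioc u t, C₀ * b⁻¹ * f t₀ ≤ f s := by
    intro s hs
    have hsS : s ∉ S := fun hsS => absurd (le_csSup hbdd hsS) (not_le.2 hs.1)
    have : ¬ f s ≤ K * f t₀ := fun hfs =>
      hsS ⟨⟨le_trans ht₀u hs.1.le, hs.2⟩, hfs⟩
    have h1 : K * f t₀ ≤ f s := le_of_not_ge this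
    have h2 : C₀ * b⁻¹ * f t₀ ≤ K * f t₀ :=
      mul_le_mul_of_nonneg_right (by rw [hKdef]; linarith) hft₀.le
    exact le_trans h2 h1
  -- integrability
  have hint : IntegrableOn f (Set.Ioc u t) := by
    have : ContinuousOn f (Set.Icc u t) :=
      hc.mono (Set.Icc_subset_Icc ht₀u le_rfl)
    exact this.integrableOn_Icc.mono_set Set.Ioc_subset_Icc_self
  have hIbound : (t - u) * (C₀ * b⁻¹ * f t₀) ≤ ∫ s in u..t, f s := by
    rw [intervalIntegral.integral_of_le hult.le]
    have hmono := setIntegral_mono_on (integrableOn_const (by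
        rw [Real.volume_Ioc]; exact ENNReal.ofReal_lt_top.ne)) hint
      measurableSet_Ioc hlow
    rw [setIntegral_const, Real.volume_real_Ioc_of_le hult.le] at hmono
    simpa [smul_eq_mul] using hmono
  have H := hineq t₀ u t ht₀ ht₀u hult.le
  have hfu : f u ≤ K * f t₀ := hu.2
  have hbb : b * b⁻¹ = 1 := mul_inv_cancel₀ hb.ne'
  have key : b * ((t - u) * (C₀ * b⁻¹ * f t₀)) = C₀ * (t - u) * f t₀ := by
    field_simp
  have h3 := mul_le_mul_of_nonneg_left hIbound hb.le
  rw [key] at h3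
  linarith
end

section
/- Let f : [0,∞) → ℝ be a continuous, positive function and E₀, b, p, C₀ > 0 constants. Assume: (i) for all 0 ≤ t₁ ≤ t₂, f(t₂) + b ∫_{t₁}^{t₂} f(s) ds ≤ f(t₁) + E₀ (t₂ − t₁)(t₁ + 1)^{−p}; and (ii) for all 0 ≤ t₀ ≤ t₁ ≤ t₂, f(t₂) + b ∫_{t₁}^{t₂} f(s) ds ≤ f(t₁) + C₀ (t₂ − t₁) f(t₀). Then there exists a constant C = C(C₀, E₀, b, p) > 0 such that f(t) ≤ C (f(0) + E₀)(1 + t)^{−p} for all t ≥ 0. -/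
open MeasureTheory

set_option maxHeartbeats 1000000

-- one-step decay lemma
lemma step1 (f : ℝ → ℝ) (E₀ b p : ℝ)
    (hf_cont : ContinuousOn f (Set.Ici 0))
    (hf_pos : ∀ t : ℝ, 0 ≤ t → 0 < f t)
    (hE₀ : 0 < E₀) (hb : 0 < b) (hp : 0 < p)
    (hineq1 : ∀ t₁ t₂ : ℝ, 0 ≤ t₁ → t₁ ≤ t₂ →
      f t₂ + b * ∫ s in t₁..t₂, f s ≤ f t₁ + E₀ * (t₂ - t₁) * (t₁ + 1) ^ (-p))
    (t : ℝ) (ht : 0 ≤ t) :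
    f (t + 2/b) ≤ f t / 2 + (3/b) * E₀ * (t + 1) ^ (-p) := by
  set L : ℝ := 2/b with hLdef
  have hL : 0 < L := by positivity
  have htL : t ≤ t + L := by linarith
  have hsub : Set.Icc t (t + L) ⊆ Set.Ici 0 := fun x hx => le_trans ht hx.1
  obtain ⟨s, hs, hmin⟩ := isCompact_Icc.exists_isMinOn ⟨t, le_refl t, htL⟩
    (hf_cont.mono hsub)
  have hts : t ≤ s := hs.1
  have hstL : s ≤ t + L := hs.2
  have hs0 : 0 ≤ s := le_trans ht hts
  have hpow_pos : (0:ℝ) < (t + 1) ^ (-p) := Real.rpow_pos_of_pos (by linarith) _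
  have hint : IntervalIntegrable f volume t (t + L) := by
    apply ContinuousOn.intervalIntegrable
    rw [Set.uIcc_of_le htL]; exact hf_cont.mono hsub
  -- lower bound on integral
  have hlow : L * f s ≤ ∫ x in t..(t+L), f x := by
    have h1 : (∫ _ in t..(t+L), f s) ≤ ∫ x in t..(t+L), f x := by
      apply intervalIntegral.integral_mono_on htL intervalIntegrable_const hint
      intro x hx; exact hmin hx
    rwa [intervalIntegral.integral_const, add_sub_cancel_left, smul_eq_mul] at h1
  have h2 := hineq1 t (t + L) ht htL
  rw [add_sub_cancel_left] at h2
  have hfpos2 : 0 < f (t + L) := hf_pos _ (by linarith)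
  have hbint : b * (L * f s) ≤ f t + E₀ * L * (t + 1) ^ (-p) := by
    nlinarith [mul_le_mul_of_nonneg_left hlow hb.le]
  have hbL : b * L = 2 := by rw [hLdef]; field_simp [hb.ne']
  have hfs : 2 * f s ≤ f t + E₀ * L * (t + 1) ^ (-p) := by
    calc 2 * f s = b * (L * f s) := by rw [← mul_assoc, hbL]
    _ ≤ _ := hbint
  -- second application
  have h3 := hineq1 s (t + L) hs0 hstL
  have hintnn : 0 ≤ ∫ x in s..(t+L), f x := by
    apply intervalIntegral.integral_nonneg hstL
    intro x hx; exact (hf_pos x (le_trans hs0 hx.1)).le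
  have hpow2 : (s + 1) ^ (-p) ≤ (t + 1) ^ (-p) :=
    Real.rpow_le_rpow_of_nonpos (by linarith) (by linarith) (by linarith)
  have hsrc : E₀ * (t + L - s) * (s + 1) ^ (-p) ≤ E₀ * L * (t + 1) ^ (-p) := by
    have hps : (0:ℝ) < (s + 1) ^ (-p) := Real.rpow_pos_of_pos (by linarith) _
    have e1 : E₀ * (t + L - s) * (s + 1) ^ (-p) ≤ E₀ * L * (s + 1) ^ (-p) :=
      mul_le_mul_of_nonneg_right
        (mul_le_mul_of_nonneg_left (by linarith) hE₀.le) hps.le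
    have e2 : E₀ * L * (s + 1) ^ (-p) ≤ E₀ * L * (t + 1) ^ (-p) :=
      mul_le_mul_of_nonneg_left hpow2 (by positivity)
    linarith
  have hfinal : f (t + L) ≤ f s + E₀ * L * (t + 1) ^ (-p) := by nlinarith
  have h3L : (3:ℝ)/b = (3/2) * L := by rw [hLdef]; ring
  rw [h3L]
  nlinarith

-- multi-step decay lemma
lemma stepn (f : ℝ → ℝ) (E₀ b p : ℝ)
    (hf_cont : ContinuousOn f (Set.Ici 0))
    (hf_pos : ∀ t : ℝ, 0 ≤ t → 0 < f t)
    (hE₀ : 0 < E₀) (hb : 0 < b) (hp : 0 < p)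
    (hineq1 : ∀ t₁ t₂ : ℝ, 0 ≤ t₁ → t₁ ≤ t₂ →
      f t₂ + b * ∫ s in t₁..t₂, f s ≤ f t₁ + E₀ * (t₂ - t₁) * (t₁ + 1) ^ (-p))
    (j : ℕ) (t : ℝ) (ht : 0 ≤ t) :
    f (t + j * (2/b)) ≤ (1/2)^j * f t + (6/b) * E₀ * (t + 1) ^ (-p) := by
  induction j with
  | zero =>
    simp only [Nat.cast_zero, zero_mul, add_zero, pow_zero, one_mul]
    have : (0:ℝ) ≤ (6/b) * E₀ * (t + 1) ^ (-p) := by positivity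
    linarith
  | succ j ih =>
    have hL : (0:ℝ) < 2/b := by positivity
    have harith : t + ((j:ℕ)+1 : ℕ) * (2/b) = (t + j * (2/b)) + 2/b := by
      push_cast; ring
    rw [harith]
    have htj : 0 ≤ t + j * (2/b) := by positivity
    have hstep := step1 f E₀ b p hf_cont hf_pos hE₀ hb hp hineq1 _ htj
    have hj : (0:ℝ) ≤ (j:ℝ) * (2/b) := by positivity
    have hpow : (t + j * (2/b) + 1) ^ (-p) ≤ (t + 1) ^ (-p) :=
      Real.rpow_le_rpow_of_nonpos (by linarith) (by linarith) (by linarith)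
    have hE3 : (3/b) * E₀ * (t + j * (2/b) + 1) ^ (-p) ≤ (3/b) * E₀ * (t + 1) ^ (-p) :=
      mul_le_mul_of_nonneg_left hpow (by positivity)
    have hhalf : (0:ℝ) < (1/2:ℝ)^j := by positivity
    calc f (t + j * (2/b) + 2/b)
        ≤ f (t + j * (2/b)) / 2 + (3/b) * E₀ * (t + j * (2/b) + 1) ^ (-p) := hstep
      _ ≤ ((1/2)^j * f t + (6/b) * E₀ * (t + 1) ^ (-p)) / 2
            + (3/b) * E₀ * (t + 1) ^ (-p) := by linarith
      _ = (1/2)^(j+1) * f t + (6/b) * E₀ * (t + 1) ^ (-p) := by ring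

/-- Gronwall-type lemma: polynomial decay. -/
theorem stmt1 (f : ℝ → ℝ) (E₀ b p C₀ : ℝ)
    (hf_cont : ContinuousOn f (Set.Ici 0))
    (hf_pos : ∀ t : ℝ, 0 ≤ t → 0 < f t)
    (hE₀ : 0 < E₀) (hb : 0 < b) (hp : 0 < p) (hC₀ : 0 < C₀)
    (hineq1 : ∀ t₁ t₂ : ℝ, 0 ≤ t₁ → t₁ ≤ t₂ →
      f t₂ + b * ∫ s in t₁..t₂, f s ≤ f t₁ + E₀ * (t₂ - t₁) * (t₁ + 1) ^ (-p))
    (hineq2 : ∀ t₀ t₁ t₂ : ℝ, 0 ≤ t₀ → t₀ ≤ t₁ → t₁ ≤ t₂ →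
      f t₂ + b * ∫ s in t₁..t₂, f s ≤ f t₁ + C₀ * (t₂ - t₁) * f t₀) :
    ∃ C : ℝ, 0 < C ∧ ∀ t : ℝ, 0 ≤ t → f t ≤ C * (f 0 + E₀) * (1 + t) ^ (-p) := by
  have hf0 : 0 < f 0 := hf_pos 0 le_rfl
  have hfE : 0 < f 0 + E₀ := by linarith
  set J : ℕ := ⌈p⌉₊ + 1 with hJdef
  have hJp : p + 1 ≤ (J : ℝ) := by
    have := Nat.le_ceil p
    push_cast [hJdef]
    linarith
  have h2p : (0:ℝ) < (2:ℝ) ^ p := Real.rpow_pos_of_pos two_pos p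
  have h2p1 : (1:ℝ) ≤ (2:ℝ) ^ p := by
    have := Real.rpow_le_rpow_of_exponent_le one_le_two hp.le
    rwa [Real.rpow_zero] at this
  -- key smallness: (1/2)^J * 2^p ≤ 1/2
  have hhalf : ((1:ℝ)/2)^J * (2:ℝ)^p ≤ 1/2 := by
    have e1 : ((1:ℝ)/2)^J = (2:ℝ) ^ (-(J:ℝ)) := by
      rw [Real.rpow_neg (by norm_num : (0:ℝ) ≤ 2), Real.rpow_natCast, one_div,
        inv_pow]
    rw [e1, ← Real.rpow_add two_pos]
    have e2 : -(J:ℝ) + p ≤ -1 := by linarith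
    have := Real.rpow_le_rpow_of_exponent_le one_le_two e2
    rw [show ((2:ℝ)) ^ (-1:ℝ) = 1/2 by
      rw [Real.rpow_neg_one]; norm_num] at this
    exact this
  set T : ℝ := (J:ℝ) * (2/b) with hTdef
  have hT : 0 < T := by positivity
  set C₁ : ℝ := max ((12/b) * (2:ℝ)^p) ((1+T) ^ (p+1)) with hC₁def
  have hC₁a : (12/b) * (2:ℝ)^p ≤ C₁ := le_max_left _ _
  have hC₁b : (1+T) ^ (p+1) ≤ C₁ := le_max_right _ _
  have hC₁pos : 0 < C₁ := lt_of_lt_of_le (by positivity) hC₁a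
  -- grid claim
  have grid : ∀ n : ℕ, 1 ≤ n → f (n * T) ≤ C₁ * (f 0 + E₀) * (1 + n * T) ^ (-p) := by
    intro n hn
    induction n with
    | zero => omega
    | succ n ih =>
      rcases Nat.eq_or_lt_of_le hn with h1 | h1
      · -- base case n+1 = 1
        have hn0 : n = 0 := by omega
        subst hn0
        have h := hineq1 0 T le_rfl hT.le
        have hintnn : 0 ≤ ∫ x in (0:ℝ)..T, f x := by
          apply intervalIntegral.integral_nonneg hT.le
          intro x hx; exact (hf_pos x hx.1).le
        rw [show ((0:ℝ)+1) = 1 by norm_num, Real.one_rpow] at h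
        have hfT : f T ≤ f 0 + E₀ * T := by nlinarith
        have hstep1 : f 0 + E₀ * T ≤ (1+T) * (f 0 + E₀) := by nlinarith
        have hstep2 : (1+T) * (f 0 + E₀) ≤ C₁ * (f 0 + E₀) * (1+T) ^ (-p) := by
          have key : (1+T) ≤ C₁ * (1+T) ^ (-p) := by
            have e3 : (1+T) ^ (p+1) * (1+T) ^ (-p) = 1+T := by
              rw [← Real.rpow_add (by linarith)]
              norm_num
            have hpw : (0:ℝ) < (1+T) ^ (-p) := Real.rpow_pos_of_pos (by linarith) _
            calc (1+T) = (1+T) ^ (p+1) * (1+T) ^ (-p) := e3.symm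
              _ ≤ C₁ * (1+T) ^ (-p) := mul_le_mul_of_nonneg_right hC₁b hpw.le
          calc (1+T) * (f 0 + E₀) ≤ (C₁ * (1+T) ^ (-p)) * (f 0 + E₀) :=
                mul_le_mul_of_nonneg_right key hfE.le
            _ = C₁ * (f 0 + E₀) * (1+T) ^ (-p) := by ring
        have : f T ≤ C₁ * (f 0 + E₀) * (1+T) ^ (-p) := by linarith
        simpa using this
      · -- inductive step: n ≥ 1
        have hn1 : 1 ≤ n := by omega
        have ihn := ih hn1
        have hn1' : (1:ℝ) ≤ (n:ℝ) := by exact_mod_cast hn1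
        have hnT : (0:ℝ) ≤ (n:ℝ) * T := by positivity
        have harith2 : ((n+1 : ℕ):ℝ) * T = (n:ℝ) * T + T := by
          push_cast; ring
        have hstep := stepn f E₀ b p hf_cont hf_pos hE₀ hb hp hineq1 J
          ((n:ℝ) * T) hnT
        rw [← hTdef] at hstep
        have hposn : (0:ℝ) < 1 + (n:ℝ) * T := by linarith
        have hposn1 : (0:ℝ) < 1 + ((n:ℝ) * T + T) := by nlinarith
        have hpwn : (0:ℝ) < (1 + (n:ℝ) * T) ^ (-p) := Real.rpow_pos_of_pos hposn _
        have hpwn1 : (0:ℝ) < (1 + ((n:ℝ) * T + T)) ^ (-p) := Real.rpow_pos_of_pos hposn1 _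
        -- ratio bound
        have hratio : (1 + (n:ℝ) * T) ^ (-p) ≤ (2:ℝ)^p * (1 + ((n:ℝ) * T + T)) ^ (-p) := by
          have hle : 1 + ((n:ℝ) * T + T) ≤ 2 * (1 + (n:ℝ) * T) := by nlinarith [hT, hn1']
          have h5 : (2 * (1 + (n:ℝ) * T)) ^ (-p) ≤ (1 + ((n:ℝ) * T + T)) ^ (-p) :=
            Real.rpow_le_rpow_of_nonpos hposn1 hle (by linarith)
          have hmr : (2 * (1 + (n:ℝ) * T)) ^ (-p)
              = (2:ℝ)^(-p) * (1 + (n:ℝ) * T) ^ (-p) :=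
            Real.mul_rpow (by norm_num) hposn.le
          have hcancel : (2:ℝ)^p * (2:ℝ)^(-p) = 1 := by
            rw [← Real.rpow_add two_pos]; norm_num
          calc (1 + (n:ℝ) * T) ^ (-p)
              = (2:ℝ)^p * ((2:ℝ)^(-p) * (1 + (n:ℝ) * T) ^ (-p)) := by
                rw [← mul_assoc ((2:ℝ)^p) ((2:ℝ)^(-p)), hcancel, one_mul]
            _ = (2:ℝ)^p * (2 * (1 + (n:ℝ) * T)) ^ (-p) := by rw [hmr]
            _ ≤ (2:ℝ)^p * (1 + ((n:ℝ) * T + T)) ^ (-p) :=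
                mul_le_mul_of_nonneg_left h5 h2p.le
        -- combine
        have hEle : E₀ ≤ f 0 + E₀ := by linarith
        have hrw : ((n:ℝ) * T + 1) = (1 + (n:ℝ) * T) := by ring
        rw [hrw] at hstep
        have hmain : f ((n:ℝ) * T + T)
            ≤ ((1/2:ℝ)^J * C₁ + 6/b) * (f 0 + E₀) * (1 + (n:ℝ) * T) ^ (-p) := by
          have t1 : (1/2:ℝ)^J * f ((n:ℝ)*T)
              ≤ (1/2:ℝ)^J * (C₁ * (f 0 + E₀) * (1 + (n:ℝ) * T) ^ (-p)) :=
            mul_le_mul_of_nonneg_left ihn (by positivity)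
          have t2 : (6/b) * E₀ * (1 + (n:ℝ) * T) ^ (-p)
              ≤ (6/b) * (f 0 + E₀) * (1 + (n:ℝ) * T) ^ (-p) := by
            apply mul_le_mul_of_nonneg_right _ hpwn.le
            exact mul_le_mul_of_nonneg_left hEle (by positivity)
          calc f ((n:ℝ) * T + T) ≤ (1/2:ℝ)^J * f ((n:ℝ)*T)
                + (6/b) * E₀ * (1 + (n:ℝ) * T) ^ (-p) := hstep
            _ ≤ (1/2:ℝ)^J * (C₁ * (f 0 + E₀) * (1 + (n:ℝ) * T) ^ (-p))
                + (6/b) * (f 0 + E₀) * (1 + (n:ℝ) * T) ^ (-p) := by linarith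
            _ = ((1/2:ℝ)^J * C₁ + 6/b) * (f 0 + E₀) * (1 + (n:ℝ) * T) ^ (-p) := by
                ring
        have hcoef : ((1/2:ℝ)^J * C₁ + 6/b) * (2:ℝ)^p ≤ C₁ := by
          have k1 : (1/2:ℝ)^J * (2:ℝ)^p * C₁ ≤ (1/2) * C₁ :=
            mul_le_mul_of_nonneg_right hhalf hC₁pos.le
          have k2 : (6/b) * (2:ℝ)^p ≤ C₁/2 := by
            have e : (6/b) * (2:ℝ)^p = (12/b * (2:ℝ)^p)/2 := by ring
            rw [e]; linarith
          have expand : ((1/2:ℝ)^J * C₁ + 6/b) * (2:ℝ)^p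
              = (1/2:ℝ)^J * (2:ℝ)^p * C₁ + (6/b) * (2:ℝ)^p := by ring
          rw [expand]; linarith
        calc f (((n+1:ℕ) : ℝ) * T) = f ((n:ℝ) * T + T) := by rw [harith2]
          _ ≤ ((1/2:ℝ)^J * C₁ + 6/b) * (f 0 + E₀) * (1 + (n:ℝ) * T) ^ (-p) := hmain
          _ ≤ ((1/2:ℝ)^J * C₁ + 6/b) * (f 0 + E₀)
              * ((2:ℝ)^p * (1 + ((n:ℝ) * T + T)) ^ (-p)) := by
            apply mul_le_mul_of_nonneg_left hratio
            positivity
          _ = (((1/2:ℝ)^J * C₁ + 6/b) * (2:ℝ)^p) * (f 0 + E₀)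
              * (1 + ((n:ℝ) * T + T)) ^ (-p) := by ring
          _ ≤ C₁ * (f 0 + E₀) * (1 + ((n:ℝ) * T + T)) ^ (-p) := by
            apply mul_le_mul_of_nonneg_right _ hpwn1.le
            exact mul_le_mul_of_nonneg_right hcoef hfE.le
          _ = C₁ * (f 0 + E₀) * (1 + ((n+1:ℕ):ℝ) * T) ^ (-p) := by rw [harith2]
  -- final constant
  refine ⟨(C₁ + T) * (2:ℝ)^p, by positivity, ?_⟩
  intro t ht
  have hpwt : (0:ℝ) < (1 + t) ^ (-p) := Real.rpow_pos_of_pos (by linarith) _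
  by_cases hcase : t ≤ T
  · -- small times
    have h := hineq1 0 t le_rfl ht
    have hintnn : 0 ≤ ∫ x in (0:ℝ)..t, f x := by
      apply intervalIntegral.integral_nonneg ht
      intro x hx; exact (hf_pos x hx.1).le
    rw [show ((0:ℝ)+1) = 1 by norm_num, Real.one_rpow] at h
    have hft : f t ≤ f 0 + E₀ * t := by nlinarith
    have h1 : f 0 + E₀ * t ≤ (1+T) * (f 0 + E₀) := by nlinarith
    have key : (1+T) ≤ C₁ * (1 + t) ^ (-p) := by
      have hpw2 : (1+T) ^ (-p) ≤ (1+t) ^ (-p) :=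
        Real.rpow_le_rpow_of_nonpos (by linarith) (by linarith) (by linarith)
      have e3 : (1+T) ^ (p+1) * (1+T) ^ (-p) = 1+T := by
        rw [← Real.rpow_add (by linarith)]
        norm_num
      have hpwT : (0:ℝ) < (1+T) ^ (-p) := Real.rpow_pos_of_pos (by linarith) _
      calc (1+T) = (1+T) ^ (p+1) * (1+T) ^ (-p) := e3.symm
        _ ≤ C₁ * (1+T) ^ (-p) := mul_le_mul_of_nonneg_right hC₁b hpwT.le
        _ ≤ C₁ * (1+t) ^ (-p) := mul_le_mul_of_nonneg_left hpw2 hC₁pos.le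
    have hCT : C₁ * (1+t)^(-p) ≤ (C₁ + T) * (2:ℝ)^p * (1+t)^(-p) := by
      apply mul_le_mul_of_nonneg_right _ hpwt.le
      nlinarith
    calc f t ≤ f 0 + E₀ * t := hft
      _ ≤ (1+T) * (f 0 + E₀) := h1
      _ ≤ (C₁ * (1+t)^(-p)) * (f 0 + E₀) := mul_le_mul_of_nonneg_right key hfE.le
      _ ≤ ((C₁ + T) * (2:ℝ)^p * (1+t)^(-p)) * (f 0 + E₀) :=
          mul_le_mul_of_nonneg_right hCT hfE.le
      _ = (C₁ + T) * (2:ℝ)^p * (f 0 + E₀) * (1 + t) ^ (-p) := by ring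
  · -- large times
    push_neg at hcase
    set n : ℕ := ⌊t / T⌋₊ with hndef
    have hdivpos : 1 ≤ t / T := (one_le_div hT).mpr hcase.le
    have hn1 : 1 ≤ n := Nat.le_floor (by exact_mod_cast hdivpos)
    have hn1' : (1:ℝ) ≤ (n:ℝ) := by exact_mod_cast hn1
    have hnle : (n:ℝ) * T ≤ t := by
      have := Nat.floor_le (by positivity : (0:ℝ) ≤ t / T)
      calc (n:ℝ) * T ≤ (t/T) * T := by
            apply mul_le_mul_of_nonneg_right _ hT.le
            exact this
        _ = t := by field_simp
    have htlt : t < ((n:ℝ)+1) * T := by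
      have := Nat.lt_floor_add_one (t / T)
      calc t = (t/T) * T := by field_simp
        _ < ((n:ℝ)+1) * T := by
            apply mul_lt_mul_of_pos_right _ hT
            exact_mod_cast this
    have hnT0 : (0:ℝ) ≤ (n:ℝ) * T := by positivity
    have hposn : (0:ℝ) < 1 + (n:ℝ) * T := by linarith
    have hgrid := grid n hn1
    have h := hineq1 ((n:ℝ)*T) t hnT0 hnle
    have hintnn : 0 ≤ ∫ x in ((n:ℝ)*T)..t, f x := by
      apply intervalIntegral.integral_nonneg hnle
      intro x hx; exact (hf_pos x (le_trans hnT0 hx.1)).le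
    have hpwnn : (0:ℝ) < ((n:ℝ)*T + 1) ^ (-p) := Real.rpow_pos_of_pos (by linarith) _
    have hsub : t - (n:ℝ)*T ≤ T := by nlinarith
    have hft : f t ≤ f ((n:ℝ)*T) + E₀ * T * ((n:ℝ)*T + 1) ^ (-p) := by
      have hsrc : E₀ * (t - (n:ℝ)*T) * ((n:ℝ)*T + 1) ^ (-p)
          ≤ E₀ * T * ((n:ℝ)*T + 1) ^ (-p) := by
        apply mul_le_mul_of_nonneg_right _ hpwnn.le
        exact mul_le_mul_of_nonneg_left hsub hE₀.le
      nlinarith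
    have hrw : ((n:ℝ)*T + 1) = (1 + (n:ℝ)*T) := by ring
    rw [hrw] at hft
    have hE2 : E₀ * T * (1 + (n:ℝ)*T) ^ (-p) ≤ T * (f 0 + E₀) * (1 + (n:ℝ)*T) ^ (-p) := by
      apply mul_le_mul_of_nonneg_right _ (by positivity)
      nlinarith
    have hratio : (1 + (n:ℝ) * T) ^ (-p) ≤ (2:ℝ)^p * (1 + t) ^ (-p) := by
      have hle : 1 + t ≤ 2 * (1 + (n:ℝ) * T) := by nlinarith
      have h5 : (2 * (1 + (n:ℝ) * T)) ^ (-p) ≤ (1 + t) ^ (-p) :=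
        Real.rpow_le_rpow_of_nonpos (by linarith) hle (by linarith)
      have hmr : (2 * (1 + (n:ℝ) * T)) ^ (-p)
          = (2:ℝ)^(-p) * (1 + (n:ℝ) * T) ^ (-p) :=
        Real.mul_rpow (by norm_num) hposn.le
      have hcancel : (2:ℝ)^p * (2:ℝ)^(-p) = 1 := by
        rw [← Real.rpow_add two_pos]; norm_num
      calc (1 + (n:ℝ) * T) ^ (-p)
          = (2:ℝ)^p * ((2:ℝ)^(-p) * (1 + (n:ℝ) * T) ^ (-p)) := by
            rw [← mul_assoc ((2:ℝ)^p) ((2:ℝ)^(-p)), hcancel, one_mul]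
        _ = (2:ℝ)^p * (2 * (1 + (n:ℝ) * T)) ^ (-p) := by rw [hmr]
        _ ≤ (2:ℝ)^p * (1 + t) ^ (-p) := mul_le_mul_of_nonneg_left h5 h2p.le
    calc f t ≤ f ((n:ℝ)*T) + E₀ * T * (1 + (n:ℝ)*T) ^ (-p) := hft
      _ ≤ C₁ * (f 0 + E₀) * (1 + (n:ℝ)*T) ^ (-p)
          + T * (f 0 + E₀) * (1 + (n:ℝ)*T) ^ (-p) := by linarith
      _ = (C₁ + T) * (f 0 + E₀) * (1 + (n:ℝ)*T) ^ (-p) := by ring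
      _ ≤ (C₁ + T) * (f 0 + E₀) * ((2:ℝ)^p * (1 + t) ^ (-p)) := by
          apply mul_le_mul_of_nonneg_left hratio
          positivity
      _ = (C₁ + T) * (2:ℝ)^p * (f 0 + E₀) * (1 + t) ^ (-p) := by ring
end
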